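/- arXiv:2008.01847 — 2 statements merged into one kernel-verified Lean document; each statement's English description precedes it below -/
import Mathlib

section
/- Let (X, w) be a weighted set, let X' = {x ∈ X : w(x) > 0}, and let F(X,w) be the free bounded archimedean ℓ-algebra on (X, w). Then the Yosida space of F(X,w), i.e., the space of bal-morphisms F(X,w) → ℝ topologized as a subspace of ℝ^{F(X,w)} with the product topology, is homeomorphic to the cube [0,1]^{X'}. -/
/-- An ℓ-algebra: a commutative unital ℝ-algebra with a lattice order such that
addition is translation-invariant, products of nonnegatives are nonnegative, and
scalar multiplication by nonnegative reals preserves nonnegativity. -/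
class LAlg (A : Type*) extends CommRing A, Lattice A, Algebra ℝ A where
  add_le_add_right' : ∀ a b : A, a ≤ b → ∀ c : A, a + c ≤ b + c
  mul_nonneg' : ∀ a b : A, 0 ≤ a → 0 ≤ b → 0 ≤ a * b
  smul_nonneg' : ∀ (r : ℝ) (a : A), 0 ≤ r → 0 ≤ a → 0 ≤ r • a

/-- `A` is bounded: `1` is a strong order unit. -/
def LAlg.IsBounded (A : Type*) [LAlg A] : Prop := ∀ a : A, ∃ n : ℕ, a ≤ n • (1 : A)

/-- `A` is archimedean. -/
def LAlg.IsArch (A : Type*) [LAlg A] : Prop := ∀ a b : A, (∀ n : ℕ, n • a ≤ b) → a ≤ 0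

/-- The norm ‖a‖ = inf {r : ℝ | |a| ≤ r·1}, where |a| = a ⊔ -a. -/
noncomputable def lnorm {A : Type*} [LAlg A] (a : A) : ℝ := sInf {r : ℝ | a ⊔ -a ≤ r • (1 : A)}

/-- A bal-morphism: a unital ℝ-algebra homomorphism preserving binary joins. -/
def IsBalHom {A B : Type*} [LAlg A] [LAlg B] (α : A →ₐ[ℝ] B) : Prop :=
  ∀ a b : A, α (a ⊔ b) = α a ⊔ α b

/-- ℝ is a bounded archimedean ℓ-algebra. -/
noncomputable instance : LAlg ℝ :=
  { (inferInstance : CommRing ℝ), (inferInstance : Lattice ℝ),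
    (inferInstance : Algebra ℝ ℝ) with
    add_le_add_right' := fun _ _ h c => by linarith
    mul_nonneg' := fun _ _ => mul_nonneg
    smul_nonneg' := fun _ _ => smul_nonneg }

/-- The Yosida space of A, realized as the set of bal-morphisms A → ℝ. -/
def YosidaSpace (A : Type*) [LAlg A] : Type _ :=
  {α : A →ₐ[ℝ] ℝ // IsBalHom α}

/-- The Yosida space is topologized as a subspace of ℝ^A with the product topology. -/
noncomputable instance (A : Type*) [LAlg A] : TopologicalSpace (YosidaSpace A) :=
  TopologicalSpace.induced (fun (α : YosidaSpace A) (a : A) => α.1 a) inferInstance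

lemma balHom_mono {A B : Type*} [LAlg A] [LAlg B] {α : A →ₐ[ℝ] B} (h : IsBalHom α) :
    Monotone α := by
  intro a b hab
  have h2 := h a b
  rw [sup_eq_right.mpr hab] at h2
  exact le_sup_left.trans h2.ge

lemma lnorm_real (a : ℝ) : lnorm a = |a| := by
  have hset : {r : ℝ | a ⊔ -a ≤ r • (1:ℝ)} = Set.Ici |a| := by
    ext r
    simp [Set.mem_Ici, abs_eq_max_neg, max_le_iff, smul_eq_mul]
  rw [lnorm, hset, csInf_Ici]

lemma isBounded_real : LAlg.IsBounded ℝ := by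
  intro a
  obtain ⟨n, hn⟩ := exists_nat_ge a
  exact ⟨n, by simpa using hn⟩

lemma isArch_real : LAlg.IsArch ℝ := by
  intro a b h
  by_contra hc
  push_neg at hc
  obtain ⟨n, hn⟩ := exists_nat_gt (b / a)
  have := h n
  rw [nsmul_eq_mul] at this
  have h2 : (n:ℝ) ≤ b / a := (le_div_iff₀ hc).mpr this
  linarith

lemma abs_apply_le_lnorm {F : Type*} [LAlg F] (hFb : LAlg.IsBounded F)
    {α : F →ₐ[ℝ] ℝ} (hα : IsBalHom α) (a : F) : |α a| ≤ lnorm a := by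
  have hne : {r : ℝ | a ⊔ -a ≤ r • (1:F)}.Nonempty := by
    obtain ⟨n, hn⟩ := hFb (a ⊔ -a)
    exact ⟨n, by rw [Set.mem_setOf_eq, Nat.cast_smul_eq_nsmul]; exact hn⟩
  apply le_csInf hne
  intro r hr
  have hmono := balHom_mono hα hr
  rw [hα a (-a), map_neg, map_smul, map_one, smul_eq_mul, mul_one] at hmono
  rw [abs_eq_max_neg]
  exact hmono

/-- the Yosida space of the free bounded archimedean ℓ-algebra on a
weighted set (X, w) is homeomorphic to the cube [0,1]^{X'"'"'}, where X'"'"' = {x | w x > 0}. -/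
theorem stmt8 (X : Type) (w : X → ℝ) (hw : ∀ x, 0 ≤ w x)
    (F : Type) [LAlg F] (hFb : LAlg.IsBounded F) (hFa : LAlg.IsArch F)
    (f : X → F) (hf : ∀ x, lnorm (f x) ≤ w x)
    (ump : ∀ (A : Type) [LAlg A], LAlg.IsBounded A → LAlg.IsArch A →
      ∀ h : X → A, (∀ x, lnorm (h x) ≤ w x) →
        ∃! α : F →ₐ[ℝ] A, IsBalHom α ∧ α ∘ f = h) :
    Nonempty (YosidaSpace F ≃ₜ ({x : X // 0 < w x} → (Set.Icc (0 : ℝ) 1 : Set ℝ))) := by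
  classical
  have keyF : ∀ (α : YosidaSpace F) (a : F), |α.1 a| ≤ lnorm a :=
    fun α a => abs_apply_le_lnorm hFb α.2 a
  have hbnd : ∀ (α : YosidaSpace F) (x : X), |α.1 (f x)| ≤ w x :=
    fun α x => (keyF α (f x)).trans (hf x)
  -- the forward map
  let Φ : YosidaSpace F → ({x : X // 0 < w x} → (Set.Icc (0:ℝ) 1 : Set ℝ)) := fun α x =>
    ⟨(α.1 (f x.1) / w x.1 + 1) / 2, by
      obtain ⟨h1, h2⟩ := abs_le.mp (hbnd α x.1)
      have hx := x.2
      have l1 : (-1:ℝ) ≤ α.1 (f x.1) / w x.1 := by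
        rw [le_div_iff₀ hx]; linarith
      have l2 : α.1 (f x.1) / w x.1 ≤ 1 := (div_le_one hx).mpr h2
      exact Set.mem_Icc.mpr ⟨by linarith, by linarith⟩⟩
  have hinj : Function.Injective Φ := by
    intro α β hEq
    have hx : ∀ x, α.1 (f x) = β.1 (f x) := by
      intro x
      rcases (hw x).lt_or_eq with hx | hx
      · have h1 := congrArg Subtype.val (congrFun hEq ⟨x, hx⟩)
        simp only [Φ] at h1
        have h2 : α.1 (f x) / w x = β.1 (f x) / w x := by linarith
        have h3 := congrArg (· * w x) h2
        simpa [div_mul_cancel₀, ne_of_gt hx] using h3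
      · have e1 : α.1 (f x) = 0 := abs_nonpos_iff.mp ((hbnd α x).trans_eq hx.symm)
        have e2 : β.1 (f x) = 0 := abs_nonpos_iff.mp ((hbnd β x).trans_eq hx.symm)
        rw [e1, e2]
    have hh : ∀ x, lnorm (α.1 (f x)) ≤ w x := fun x => by
      rw [lnorm_real]; exact hbnd α x
    obtain ⟨γ, hγ, huniq⟩ := ump ℝ isBounded_real isArch_real (fun x => α.1 (f x)) hh
    have e1 := huniq α.1 ⟨α.2, rfl⟩
    have e2 := huniq β.1 ⟨β.2, funext fun x => (hx x).symm⟩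
    exact Subtype.ext (e1.trans e2.symm)
  have hsurj : Function.Surjective Φ := by
    intro t
    let h : X → ℝ := fun x =>
      if hx : 0 < w x then w x * (2 * ((t ⟨x, hx⟩ : ℝ)) - 1) else 0
    have hh : ∀ x, lnorm (h x) ≤ w x := by
      intro x
      rw [lnorm_real]
      by_cases hx : 0 < w x
      · obtain ⟨ht1, ht2⟩ := Set.mem_Icc.mp (t ⟨x, hx⟩).2
        simp only [h, dif_pos hx, abs_mul, abs_of_pos hx]
        calc w x * |2 * ((t ⟨x, hx⟩ : ℝ)) - 1| ≤ w x * 1 := by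
              apply mul_le_mul_of_nonneg_left _ (le_of_lt hx)
              rw [abs_le]; constructor <;> linarith
          _ = w x := mul_one _
      · simp only [h, dif_neg hx, abs_zero]; exact hw x
    obtain ⟨α, ⟨hbal, hcomp⟩, -⟩ := ump ℝ isBounded_real isArch_real h hh
    refine ⟨⟨α, hbal⟩, ?_⟩
    funext x
    apply Subtype.ext
    have hfx : α (f x.1) = h x.1 := congrFun hcomp x.1
    show (α (f x.1) / w x.1 + 1) / 2 = (t x : ℝ)
    rw [hfx]
    have hx := x.2
    simp only [h, dif_pos hx]
    field_simp
    ring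
  let e : YosidaSpace F ≃ ({x : X // 0 < w x} → (Set.Icc (0:ℝ) 1 : Set ℝ)) :=
    Equiv.ofBijective Φ ⟨hinj, hsurj⟩
  -- topology
  let T : YosidaSpace F → (F → ℝ) := fun α a => α.1 a
  have hT : Topology.IsInducing T := ⟨rfl⟩
  have hΦcont : Continuous Φ := by
    apply continuous_pi
    intro x
    apply Continuous.subtype_mk
    have hev : Continuous fun α : YosidaSpace F => α.1 (f x.1) :=
      (continuous_apply (f x.1)).comp hT.continuous
    exact ((hev.div_const _).add continuous_const).div_const _
  -- compactness
  let C : Set (F → ℝ) :=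
    {g | (∀ a b, g (a+b) = g a + g b) ∧ (∀ a b, g (a*b) = g a * g b) ∧
      (∀ r : ℝ, g (algebraMap ℝ F r) = r) ∧ ∀ a b, g (a ⊔ b) = g a ⊔ g b}
  have hrangeEq : Set.range T = C := by
    ext g
    constructor
    · rintro ⟨α, rfl⟩
      exact ⟨fun a b => map_add α.1 a b, fun a b => map_mul α.1 a b,
        fun r => α.1.commutes r, fun a b => α.2 a b⟩
    · rintro ⟨hadd, hmul, hcomm, hsup⟩
      have hzero : g 0 = 0 := by have := hadd 0 0; simp at this; linarith
      have hone : g 1 = 1 := by simpa using hcomm 1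
      let α0 : F →ₐ[ℝ] ℝ :=
        { toFun := g
          map_one' := hone
          map_mul' := fun a b => hmul a b
          map_zero' := hzero
          map_add' := fun a b => hadd a b
          commutes' := hcomm }
      exact ⟨⟨α0, fun a b => hsup a b⟩, rfl⟩
  have hCclosed : IsClosed C := by
    have : C = (⋂ (a : F), ⋂ (b : F), {g : F → ℝ | g (a+b) = g a + g b}) ∩
        ((⋂ (a : F), ⋂ (b : F), {g : F → ℝ | g (a*b) = g a * g b}) ∩
        ((⋂ (r : ℝ), {g : F → ℝ | g (algebraMap ℝ F r) = r}) ∩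
        (⋂ (a : F), ⋂ (b : F), {g : F → ℝ | g (a ⊔ b) = g a ⊔ g b}))) := by
      ext g
      simp only [C, Set.mem_setOf_eq, Set.mem_inter_iff, Set.mem_iInter]
    rw [this]
    refine IsClosed.inter ?_ (IsClosed.inter ?_ (IsClosed.inter ?_ ?_))
    · exact isClosed_iInter fun a => isClosed_iInter fun b =>
        isClosed_eq (continuous_apply (a+b)) ((continuous_apply a).add (continuous_apply b))
    · exact isClosed_iInter fun a => isClosed_iInter fun b =>
        isClosed_eq (continuous_apply (a*b)) ((continuous_apply a).mul (continuous_apply b))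
    · exact isClosed_iInter fun r => isClosed_eq (continuous_apply _) continuous_const
    · exact isClosed_iInter fun a => isClosed_iInter fun b =>
        isClosed_eq (continuous_apply (a⊔b)) ((continuous_apply a).sup (continuous_apply b))
  have hsub : Set.range T ⊆ Set.pi Set.univ (fun a : F => Set.Icc (-(lnorm a)) (lnorm a)) := by
    rintro g ⟨α, rfl⟩ a -
    exact Set.mem_Icc.mpr (abs_le.mp (keyF α a))
  have hScompact : IsCompact (Set.pi Set.univ fun a : F => Set.Icc (-(lnorm a)) (lnorm a)) :=
    isCompact_univ_pi fun a => isCompact_Icc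
  have hrange : IsCompact (Set.range T) :=
    hScompact.of_isClosed_subset (hrangeEq ▸ hCclosed) hsub
  have : CompactSpace (YosidaSpace F) := by
    exact ⟨by rw [hT.isCompact_iff, Set.image_univ]; exact hrange⟩
  exact ⟨Continuous.homeoOfEquivCompactToT2 (f := e) hΦcont⟩
end

section
/- Let X be a nonempty set. There is no basic algebra F together with a function f : X → F such that for every basic algebra C and every function g : X → C there exists a unique normal homomorphism γ : F → C with γ ∘ f = g. Consequently, the forgetful functor from basic algebras (with normal homomorphisms) to sets has no left adjoint. -/
/-- Dedekind completeness: every nonempty subset bounded above has a supremum. -/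
def DedekindComplete (C : Type*) [LAlg C] : Prop :=
  ∀ S : Set C, S.Nonempty → BddAbove S → ∃ c : C, IsLUB S c

/-- `a` is an atom of the boolean algebra of idempotents (where `f ≤ e` iff `f * e = f`). -/
def IsIdemAtom {C : Type*} [LAlg C] (a : C) : Prop :=
  a * a = a ∧ a ≠ 0 ∧ ∀ f : C, f * f = f → f * a = f → f = 0 ∨ f = a

/-- The boolean algebra of idempotents of `C` is atomic. -/
def IdemAtomic (C : Type*) [LAlg C] : Prop :=
  ∀ e : C, e * e = e → e ≠ 0 → ∃ a : C, IsIdemAtom a ∧ a * e = a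

/-- A basic algebra: a Dedekind complete bounded archimedean ℓ-algebra whose boolean
algebra of idempotents is atomic. -/
def IsBasic (C : Type*) [LAlg C] : Prop :=
  LAlg.IsBounded C ∧ LAlg.IsArch C ∧ DedekindComplete C ∧ IdemAtomic C

/-- A normal homomorphism: a bal-morphism preserving all existing suprema and infima. -/
def IsNormal {A B : Type*} [LAlg A] [LAlg B] (γ : A →ₐ[ℝ] B) : Prop :=
  IsBalHom γ ∧
  (∀ (S : Set A) (a : A), IsLUB S a → IsLUB (γ '' S) (γ a)) ∧
  (∀ (S : Set A) (a : A), IsGLB S a → IsGLB (γ '' S) (γ a))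


noncomputable instance inst_s17 : LAlg ℝ :=
  { (inferInstance : CommRing ℝ), (inferInstance : Lattice ℝ),
    (inferInstance : Algebra ℝ ℝ) with
    add_le_add_right' := fun a b hab c => by linarith
    mul_nonneg' := fun a b => mul_nonneg
    smul_nonneg' := fun r a hr ha => smul_nonneg hr ha }

lemma real_isBasic : IsBasic ℝ := by
  refine ⟨fun a => ⟨⌈a⌉₊, ?_⟩, fun a b hab => ?_, fun S hne hbdd => Real.exists_isLUB hne hbdd,
    fun e he hne => ⟨1, ⟨one_mul 1, one_ne_zero, fun g hg hg1 => ?_⟩, ?_⟩⟩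
  · simpa using Nat.le_ceil a
  · by_contra hlt
    push_neg at hlt
    obtain ⟨n, hn⟩ := exists_nat_gt (b / a)
    have := hab n
    rw [nsmul_eq_mul] at this
    rw [div_lt_iff₀ hlt] at hn
    linarith
  · rcases mul_eq_zero.mp (by ring_nf; linarith [hg] : g * (g - 1) = 0) with h0 | h1
    · exact Or.inl h0
    · exact Or.inr (by linarith)
  · have : e = 1 := by
      rcases mul_eq_zero.mp (by ring_nf; linarith [he] : e * (e - 1) = 0) with h0 | h1
      · exact absurd h0 hne
      · linarith
    rw [this, one_mul]

/-- there is no free basic algebra on a nonempty set; the forgetful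
functor from basic algebras (with normal homomorphisms) to sets has no left adjoint. -/
theorem stmt17 (X : Type) [Nonempty X] (F : Type) [LAlg F]
    (hF : IsBasic F) (f : X → F)
    (h : ∀ (C : Type) [LAlg C], IsBasic C →
      ∀ g : X → C, ∃! γ : F →ₐ[ℝ] C, IsNormal γ ∧ γ ∘ f = g) :
    False := by
  obtain ⟨x₀⟩ := ‹Nonempty X›
  obtain ⟨n, hn⟩ := hF.1 (f x₀)
  obtain ⟨γ, ⟨⟨hbal, -, -⟩, hcomm⟩, -⟩ := h ℝ real_isBasic (fun _ => (n : ℝ) + 1)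
  have hmono : γ (f x₀) ≤ γ (n • (1 : F)) := by
    have := hbal (f x₀) (n • (1 : F))
    rw [sup_eq_right.mpr hn] at this
    exact le_sup_left.trans this.ge
  have h1 : γ (f x₀) = (n : ℝ) + 1 := congrFun hcomm x₀
  have h2 : γ (n • (1 : F)) = (n : ℝ) := by
    rw [map_nsmul, map_one, nsmul_eq_mul, mul_one]
  rw [h1, h2] at hmono
  linarith
end
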